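/- Worst-case error bound for the HDS mechanism under propagation: let x̃_{u,j} be HDS-perturbed features with values in [-b-1, b+1], E[x̃_{u,j}] = C·x_{u,j}, and Var[x̃_{u,j}] ≤ σ². Let z̃_{v,j} = ∑_u Π(v,u) x̃_{u,j} with Π(v,u) ≥ 0, ∑_u Π(v,u) = 1, and z_{v,j} = ∑_u Π(v,u) x_{u,j} ∈ [-1,1]. Then for any δ ∈ (0,1), with probability at least 1-δ: max_{j∈{1,...,d}} |z̃_{v,j} - z_{v,j}| ≤ τ + (1-C), where τ satisfies 2d·exp(-τ²/(2σ²‖Π_v‖₂² + (4/3)τ(b+1))) ≤ δ. -/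

import Mathlib

open Real MeasureTheory ProbabilityTheory
open scoped Nat ENNReal

/-- Worst-case error of the HDS mechanism under personalized-PageRank propagation:
with perturbed features bounded in `[-b-1, b+1]`, mean `C·x_{u,j}`, variance at most
`σ²`, independent across nodes, and propagation weights `w = Π_v` (nonnegative, summing
to `1`), if `τ` satisfies `2d·exp(-τ²/(2σ²‖Π_v‖₂² + (4/3)τ(b+1))) ≤ δ` then with
probability at least `1-δ` we have `|z̃_{v,j} - z_{v,j}| ≤ τ + (1-C)` for every
coordinate `j`. -/
lemma aux_factorial (n : ℕ) : 2 * 3 ^ n ≤ (n + 2)! := by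
  induction n with
  | zero => simp [Nat.factorial]
  | succ k ih =>
      calc 2 * 3 ^ (k + 1) = 3 * (2 * 3 ^ k) := by ring
        _ ≤ 3 * (k + 2)! := by omega
        _ ≤ (k + 3) * (k + 2)! := by
            have : (0:ℕ) < (k+2)! := Nat.factorial_pos _
            nlinarith
        _ = (k + 1 + 2)! := by
            simp [Nat.factorial_succ]

lemma aux_exp_le {x a : ℝ} (h : |x| ≤ a) (ha : a < 3) :
    Real.exp x ≤ 1 + x + x ^ 2 * (1 / (2 * (1 - a / 3))) := by
  have ha0 : 0 ≤ a := (abs_nonneg x).trans h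
  have hsum := Real.summable_pow_div_factorial x
  have hexp : Real.exp x = ∑' n : ℕ, x ^ n / n ! := by
    rw [Real.exp_eq_exp_ℝ, NormedSpace.exp_eq_tsum_div]
  have hsplit : ∑' n : ℕ, x ^ n / n ! =
      (∑ i ∈ Finset.range 2, x ^ i / i !) + ∑' n : ℕ, x ^ (n + 2) / (n + 2)! :=
    (Summable.sum_add_tsum_nat_add 2 hsum).symm
  have hrange : (∑ i ∈ Finset.range 2, x ^ i / i !) = 1 + x := by
    simp [Finset.sum_range_succ, Nat.factorial]
  have hterm : ∀ n : ℕ, x ^ (n + 2) / (n + 2)! ≤ x ^ 2 / 2 * (a / 3) ^ n := by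
    intro n
    have h1 : x ^ (n + 2) ≤ x ^ 2 * a ^ n := by
      calc x ^ (n + 2) ≤ |x ^ (n + 2)| := le_abs_self _
        _ = |x| ^ 2 * |x| ^ n := by rw [abs_pow]; ring
        _ ≤ |x| ^ 2 * a ^ n := by gcongr
        _ = x ^ 2 * a ^ n := by rw [sq_abs]
    have h2 : (2 * 3 ^ n : ℝ) ≤ ((n + 2)! : ℝ) := by
      exact_mod_cast aux_factorial n
    have hfac : (0:ℝ) < ((n + 2)! : ℝ) := by positivity
    calc x ^ (n + 2) / (n + 2)! ≤ (x ^ 2 * a ^ n) / (n + 2)! := by gcongr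
      _ ≤ (x ^ 2 * a ^ n) / (2 * 3 ^ n) := by
          gcongr
      _ = x ^ 2 / 2 * (a / 3) ^ n := by
          rw [div_pow]; field_simp
  have hr1 : (0:ℝ) ≤ a / 3 := by positivity
  have hr2 : a / 3 < 1 := by linarith
  have hsumL : Summable (fun n : ℕ => x ^ (n + 2) / (n + 2)!) := by
    simpa using (summable_nat_add_iff 2).2 hsum
  have hsumR : Summable (fun n : ℕ => x ^ 2 / 2 * (a / 3) ^ n) :=
    (summable_geometric_of_lt_one hr1 hr2).mul_left _
  have htail : ∑' n : ℕ, x ^ (n + 2) / (n + 2)! ≤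
      x ^ 2 * (1 / (2 * (1 - a / 3))) := by
    calc ∑' n : ℕ, x ^ (n + 2) / (n + 2)!
        ≤ ∑' n : ℕ, x ^ 2 / 2 * (a / 3) ^ n := Summable.tsum_le_tsum hterm hsumL hsumR
      _ = x ^ 2 / 2 * (1 - a / 3)⁻¹ := by
          rw [tsum_mul_left, tsum_geometric_of_lt_one hr1 hr2]
      _ = x ^ 2 * (1 / (2 * (1 - a / 3))) := by
          have : (0:ℝ) < 1 - a / 3 := by linarith
          field_simp
  rw [hexp, hsplit, hrange]
  linarith


lemma aux_nonempty {Ω : Type*} [MeasurableSpace Ω] (μ : Measure Ω)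
    [IsProbabilityMeasure μ] : Nonempty Ω := by
  by_contra h
  have h1 : (μ Set.univ) = 1 := measure_univ
  rw [Set.univ_eq_empty_iff.mpr (not_nonempty_iff.mp h), measure_empty] at h1
  exact zero_ne_one h1

lemma aux_integrable_of_bounded {Ω : Type*} [MeasurableSpace Ω] {μ : Measure Ω}
    [IsProbabilityMeasure μ] {f : Ω → ℝ} (hf : Measurable f) {K : ℝ}
    (hK : ∀ ω, |f ω| ≤ K) : Integrable f μ :=
  ⟨hf.aestronglyMeasurable,
    HasFiniteIntegral.of_bounded (C := K) (Filter.Eventually.of_forall fun ω => by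
      simpa [Real.norm_eq_abs] using hK ω)⟩

lemma aux_mgf_le {Ω : Type*} [MeasurableSpace Ω] {μ : Measure Ω} [IsProbabilityMeasure μ]
    {Y : Ω → ℝ} (hY : Measurable Y) {M t : ℝ} (hbdd : ∀ ω, |Y ω| ≤ M)
    (hmean : ∫ ω, Y ω ∂μ = 0) (ht : 0 ≤ t) (htM : t * M < 3) :
    mgf Y μ t ≤ Real.exp (variance Y μ * (t ^ 2 * (1 / (2 * (1 - t * M / 3))))) := by
  have hΩ : Nonempty Ω := aux_nonempty μ
  have hM0 : 0 ≤ M := (abs_nonneg _).trans (hbdd (Classical.arbitrary Ω))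
  set c : ℝ := 1 / (2 * (1 - t * M / 3)) with hc
  have h1c : 0 < 1 - t * M / 3 := by linarith
  have hc0 : 0 < c := by rw [hc]; positivity
  have hpt : ∀ ω, Real.exp (t * Y ω) ≤ 1 + t * Y ω + c * t ^ 2 * (Y ω) ^ 2 := by
    intro ω
    have habs : |t * Y ω| ≤ t * M := by
      rw [abs_mul, abs_of_nonneg ht]
      exact mul_le_mul_of_nonneg_left (hbdd ω) ht
    have := aux_exp_le habs htM
    calc Real.exp (t * Y ω) ≤ 1 + t * Y ω + (t * Y ω) ^ 2 * c := this
      _ = 1 + t * Y ω + c * t ^ 2 * (Y ω) ^ 2 := by ring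
  have hYint : Integrable Y μ := aux_integrable_of_bounded hY hbdd
  have hY2int : Integrable (fun ω => (Y ω) ^ 2) μ := by
    apply aux_integrable_of_bounded (hY.pow_const 2) (K := M ^ 2)
    intro ω
    rw [abs_pow]
    exact pow_le_pow_left₀ (abs_nonneg _) (hbdd ω) 2
  have hexpint : Integrable (fun ω => Real.exp (t * Y ω)) μ := by
    apply aux_integrable_of_bounded (by fun_prop) (K := Real.exp (t * M))
    intro ω
    rw [abs_of_pos (Real.exp_pos _), Real.exp_le_exp]
    calc t * Y ω ≤ t * |Y ω| := by
          exact mul_le_mul_of_nonneg_left (le_abs_self _) ht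
      _ ≤ t * M := mul_le_mul_of_nonneg_left (hbdd ω) ht
  have hgint : Integrable (fun ω => 1 + t * Y ω + c * t ^ 2 * (Y ω) ^ 2) μ := by
    exact ((integrable_const 1).add (hYint.const_mul t)).add (hY2int.const_mul _)
  have hmemlp : MemLp Y 2 μ :=
    MemLp.of_bound hY.aestronglyMeasurable M (Filter.Eventually.of_forall fun ω => by
      simpa [Real.norm_eq_abs] using hbdd ω)
  have hvar : ∫ ω, (Y ω) ^ 2 ∂μ = variance Y μ := by
    rw [variance_eq_sub hmemlp, hmean]
    simp
  calc mgf Y μ t = ∫ ω, Real.exp (t * Y ω) ∂μ := rfl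
    _ ≤ ∫ ω, (1 + t * Y ω + c * t ^ 2 * (Y ω) ^ 2) ∂μ :=
        integral_mono hexpint hgint hpt
    _ = 1 + t * (∫ ω, Y ω ∂μ) + c * t ^ 2 * (∫ ω, (Y ω) ^ 2 ∂μ) := by
        have hint1 : Integrable (fun ω => 1 + t * Y ω) μ :=
          (integrable_const 1).add (hYint.const_mul t)
        have hint2 : Integrable (fun ω => c * t ^ 2 * (Y ω) ^ 2) μ := hY2int.const_mul _
        rw [integral_add hint1 hint2, integral_add (integrable_const 1) (hYint.const_mul t),
          integral_const, integral_const_mul, integral_const_mul]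
        simp
    _ = 1 + variance Y μ * (t ^ 2 * c) := by rw [hmean, hvar]; ring
    _ ≤ Real.exp (variance Y μ * (t ^ 2 * c)) := by
        linarith [Real.add_one_le_exp (variance Y μ * (t ^ 2 * c))]

lemma aux_bernstein {Ω : Type*} [MeasurableSpace Ω] {μ : Measure Ω} [IsProbabilityMeasure μ]
    {ι : Type*} [Fintype ι] (Y : ι → Ω → ℝ) (hYm : ∀ i, Measurable (Y i))
    (hindep : iIndepFun Y μ)
    {M : ℝ} (hM : 0 < M) (hbdd : ∀ i ω, |Y i ω| ≤ M)
    (hmean : ∀ i, ∫ ω, Y i ω ∂μ = 0)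
    {v : ℝ} (hv : 0 ≤ v) (hvar : ∑ i, variance (Y i) μ ≤ v)
    {τ : ℝ} (hτ : 0 < τ) :
    μ {ω | τ ≤ ∑ i, Y i ω} ≤ ENNReal.ofReal (Real.exp (-τ ^ 2 / (2 * v + 2 / 3 * M * τ))) := by
  classical
  have hXm : Measurable (∑ i, Y i) := by
    have : (∑ i, Y i) = fun ω => ∑ i, Y i ω := by ext ω; simp
    rw [this]; exact Finset.measurable_sum _ fun i _ => hYm i
  have hXbdd : ∀ ω, |(∑ i, Y i) ω| ≤ (Fintype.card ι) * M := by
    intro ω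
    rw [Finset.sum_apply]
    calc |∑ i, Y i ω| ≤ ∑ i, |Y i ω| := Finset.abs_sum_le_sum_abs _ _
      _ ≤ ∑ _i : ι, M := Finset.sum_le_sum fun i _ => hbdd i ω
      _ = (Fintype.card ι) * M := by simp [Finset.sum_const, Finset.card_univ, nsmul_eq_mul]
  have key : ∀ v' : ℝ, 0 < v' → (∑ i, variance (Y i) μ) ≤ v' →
      (μ {ω | τ ≤ ∑ i, Y i ω}).toReal ≤ Real.exp (-τ ^ 2 / (2 * v' + 2 / 3 * M * τ)) := by
    intro v' hv' hvar'
    set D : ℝ := v' + M * τ / 3 with hD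
    have hD0 : 0 < D := by positivity
    set t : ℝ := τ / D with htdef
    have ht0 : 0 < t := div_pos hτ hD0
    have htM : t * M < 3 := by
      rw [htdef, div_mul_eq_mul_div, div_lt_iff₀ hD0]
      have h3 : 3 * D = 3 * v' + M * τ := by rw [hD]; ring
      nlinarith
    have h1c : 0 < 1 - t * M / 3 := by linarith
    set c : ℝ := 1 / (2 * (1 - t * M / 3)) with hc
    have hc0 : 0 < c := by rw [hc]; positivity
    have hint : Integrable (fun ω => Real.exp (t * (∑ i, Y i) ω)) μ := by
      apply aux_integrable_of_bounded (by fun_prop) (K := Real.exp (t * ((Fintype.card ι) * M)))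
      intro ω
      rw [abs_of_pos (Real.exp_pos _), Real.exp_le_exp]
      have h1 : (∑ i, Y i) ω ≤ (Fintype.card ι) * M := (abs_le.1 (hXbdd ω)).2
      exact mul_le_mul_of_nonneg_left h1 ht0.le
    have hchernoff := measure_ge_le_exp_mul_mgf (μ := μ) (X := ∑ i, Y i) τ ht0.le hint
    have hmgf : mgf (∑ i, Y i) μ t ≤ Real.exp (v' * (t ^ 2 * c)) := by
      rw [show (∑ i, Y i) = ∑ i ∈ Finset.univ, Y i from rfl, hindep.mgf_sum hYm]
      calc ∏ i, mgf (Y i) μ t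
          ≤ ∏ i, Real.exp (variance (Y i) μ * (t ^ 2 * c)) := by
            apply Finset.prod_le_prod (fun i _ => mgf_nonneg)
            intro i _
            exact aux_mgf_le (hYm i) (hbdd i) (hmean i) ht0.le htM
        _ = Real.exp (∑ i, variance (Y i) μ * (t ^ 2 * c)) := by rw [Real.exp_sum]
        _ ≤ Real.exp (v' * (t ^ 2 * c)) := by
            rw [Real.exp_le_exp, ← Finset.sum_mul]
            apply mul_le_mul_of_nonneg_right hvar' (by positivity)
    have halg : -t * τ + v' * (t ^ 2 * c) = -τ ^ 2 / (2 * v' + 2 / 3 * M * τ) := by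
      have h1 : 1 - t * M / 3 = v' / D := by
        rw [htdef]; field_simp; ring
      have h2 : 2 * v' + 2 / 3 * M * τ = 2 * D := by rw [hD]; ring
      rw [h2, hc, h1, htdef]
      field_simp
      ring
    have hseteq : {ω | τ ≤ ∑ i, Y i ω} = {ω | τ ≤ (∑ i, Y i) ω} := by
      ext ω; simp [Finset.sum_apply]
    calc (μ {ω | τ ≤ ∑ i, Y i ω}).toReal
        = (μ {ω | τ ≤ (∑ i, Y i) ω}).toReal := by rw [hseteq]
      _ ≤ Real.exp (-t * τ) * mgf (∑ i, Y i) μ t := hchernoff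
      _ ≤ Real.exp (-t * τ) * Real.exp (v' * (t ^ 2 * c)) := by
          exact mul_le_mul_of_nonneg_left hmgf (Real.exp_pos _).le
      _ = Real.exp (-t * τ + v' * (t ^ 2 * c)) := (Real.exp_add _ _).symm
      _ = Real.exp (-τ ^ 2 / (2 * v' + 2 / 3 * M * τ)) := by rw [halg]
  -- limit argument to allow v = 0
  have hfinal : (μ {ω | τ ≤ ∑ i, Y i ω}).toReal ≤
      Real.exp (-τ ^ 2 / (2 * v + 2 / 3 * M * τ)) := by
    set f : ℝ → ℝ := fun ε => Real.exp (-τ ^ 2 / (2 * (v + ε) + 2 / 3 * M * τ)) with hf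
    have hden : 0 < 2 * v + 2 / 3 * M * τ := by positivity
    have hcont : ContinuousAt f 0 := by
      apply Real.continuous_exp.continuousAt.comp
      apply ContinuousAt.div continuousAt_const (by fun_prop)
      simpa using hden.ne'
    have hev : ∀ᶠ ε in nhdsWithin (0:ℝ) (Set.Ioi 0),
        (μ {ω | τ ≤ ∑ i, Y i ω}).toReal ≤ f ε := by
      apply eventually_nhdsWithin_of_forall
      intro ε hε
      have hε0 : (0:ℝ) < ε := hε
      exact key (v + ε) (by linarith) (by linarith)
    have hf0 : f 0 = Real.exp (-τ ^ 2 / (2 * v + 2 / 3 * M * τ)) := by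
      simp [hf]
    have := ge_of_tendsto (hcont.tendsto.mono_left nhdsWithin_le_nhds) hev
    rwa [hf0] at this
  calc μ {ω | τ ≤ ∑ i, Y i ω}
      = ENNReal.ofReal ((μ {ω | τ ≤ ∑ i, Y i ω}).toReal) :=
        (ENNReal.ofReal_toReal (measure_ne_top _ _)).symm
    _ ≤ ENNReal.ofReal (Real.exp (-τ ^ 2 / (2 * v + 2 / 3 * M * τ))) :=
        ENNReal.ofReal_le_ofReal hfinal

lemma aux_bernstein_two {Ω : Type*} [MeasurableSpace Ω] {μ : Measure Ω} [IsProbabilityMeasure μ]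
    {ι : Type*} [Fintype ι] (Y : ι → Ω → ℝ) (hYm : ∀ i, Measurable (Y i))
    (hindep : iIndepFun Y μ)
    {M : ℝ} (hM : 0 < M) (hbdd : ∀ i ω, |Y i ω| ≤ M)
    (hmean : ∀ i, ∫ ω, Y i ω ∂μ = 0)
    {v : ℝ} (hv : 0 ≤ v) (hvar : ∑ i, variance (Y i) μ ≤ v)
    {τ : ℝ} (hτ : 0 < τ) :
    μ {ω | τ < |∑ i, Y i ω|} ≤
      ENNReal.ofReal (Real.exp (-τ ^ 2 / (2 * v + 2 / 3 * M * τ))) +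
      ENNReal.ofReal (Real.exp (-τ ^ 2 / (2 * v + 2 / 3 * M * τ))) := by
  set Y' : ι → Ω → ℝ := fun i ω => -Y i ω with hY'
  have hY'm : ∀ i, Measurable (Y' i) := fun i => (hYm i).neg
  have hindep' : iIndepFun Y' μ :=
    hindep.comp (fun _ r => -r) (fun _ => measurable_neg)
  have hbdd' : ∀ i ω, |Y' i ω| ≤ M := fun i ω => by
    simpa [hY', abs_neg] using hbdd i ω
  have hmean' : ∀ i, ∫ ω, Y' i ω ∂μ = 0 := fun i => by
    simp [hY', integral_neg, hmean i]
  have hvar' : ∑ i, variance (Y' i) μ ≤ v := by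
    have : ∀ i, variance (Y' i) μ = variance (Y i) μ := by
      intro i
      have h : Y' i = fun ω => (-1 : ℝ) * Y i ω := by funext ω; simp [hY']
      rw [h, variance_const_mul]; norm_num
    simp only [this]; exact hvar
  have hsub : {ω | τ < |∑ i, Y i ω|} ⊆
      {ω | τ ≤ ∑ i, Y i ω} ∪ {ω | τ ≤ ∑ i, Y' i ω} := by
    intro ω hω
    have hω' : τ < |∑ i, Y i ω| := hω
    rcases lt_abs.1 hω' with h | h
    · exact Or.inl h.le
    · refine Or.inr ?_
      have : ∑ i, Y' i ω = -∑ i, Y i ω := by simp [hY']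
      show τ ≤ ∑ i, Y' i ω
      rw [this]; exact h.le
  calc μ {ω | τ < |∑ i, Y i ω|}
      ≤ μ ({ω | τ ≤ ∑ i, Y i ω} ∪ {ω | τ ≤ ∑ i, Y' i ω}) := measure_mono hsub
    _ ≤ μ {ω | τ ≤ ∑ i, Y i ω} + μ {ω | τ ≤ ∑ i, Y' i ω} := measure_union_le _ _
    _ ≤ _ := by
        gcongr
        · exact aux_bernstein Y hYm hindep hM hbdd hmean hv hvar hτ
        · exact aux_bernstein Y' hY'm hindep' hM hbdd' hmean' hv hvar' hτ

lemma aux_variance_sub_const {Ω : Type*} [MeasurableSpace Ω] {μ : Measure Ω}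
    [IsProbabilityMeasure μ] {X : Ω → ℝ} (hX : MemLp X 2 μ) (a : ℝ) :
    variance (fun ω => X ω - a) μ = variance X μ := by
  have hXa : MemLp (fun ω => X ω - a) 2 μ := hX.sub (memLp_const a)
  rw [variance_eq_integral hXa.aemeasurable, variance_eq_integral hX.aemeasurable]
  have hint : ∫ ω, (X ω - a) ∂μ = (∫ ω, X ω ∂μ) - a := by
    rw [integral_sub (hX.integrable one_le_two) (integrable_const a), integral_const]
    simp
  congr 1
  funext ω
  simp only [Pi.pow_apply, Pi.sub_apply, hint]
  ring

theorem hds_propagation_error {Ω : Type*} [MeasurableSpace Ω]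
    (μ : Measure Ω) [IsProbabilityMeasure μ]
    {V : Type*} [Fintype V] [Nonempty V] (d : ℕ)
    (b : ℝ) (hb : 0 ≤ b) (C : ℝ) (hC : C ∈ Set.Icc (0 : ℝ) 1)
    (σ : ℝ) (hσ : 0 ≤ σ)
    (x : V → Fin d → ℝ) (hx : ∀ u j, x u j ∈ Set.Icc (-1 : ℝ) 1)
    (xt : V → Fin d → Ω → ℝ) (hmeas : ∀ u j, Measurable (xt u j))
    (hbounded : ∀ u j ω, xt u j ω ∈ Set.Icc (-b - 1) (b + 1))
    (hmean : ∀ u j, ∫ ω, xt u j ω ∂μ = C * x u j)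
    (hvar : ∀ u j, variance (xt u j) μ ≤ σ ^ 2)
    (hindep : ∀ j : Fin d, iIndepFun (fun u => xt u j) μ)
    (w : V → ℝ) (hw0 : ∀ u, 0 ≤ w u) (hw1 : ∑ u, w u = 1)
    (hz : ∀ j : Fin d, (∑ u, w u * x u j) ∈ Set.Icc (-1 : ℝ) 1)
    (δ : ℝ) (hδ : δ ∈ Set.Ioo (0 : ℝ) 1)
    (τ : ℝ) (hτ : 0 < τ)
    (hτδ : 2 * d * Real.exp (-τ ^ 2 /
        (2 * σ ^ 2 * (∑ u, w u ^ 2) + (4 / 3) * τ * (b + 1))) ≤ δ) :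
    ENNReal.ofReal (1 - δ) ≤
      μ {ω | ∀ j : Fin d,
        |(∑ u, w u * xt u j ω) - ∑ u, w u * x u j| ≤ τ + (1 - C)} := by
  classical
  obtain ⟨hC0, hC1⟩ := hC
  obtain ⟨hδ0, hδ1⟩ := hδ
  set W : ℝ := ∑ u, w u ^ 2 with hW
  set E : ℝ := Real.exp (-τ ^ 2 / (2 * σ ^ 2 * W + (4 / 3) * τ * (b + 1))) with hE
  have hwle1 : ∀ u, w u ≤ 1 := fun u => by
    rw [← hw1]; exact Finset.single_le_sum (fun v _ => hw0 v) (Finset.mem_univ u)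
  have hxtabs : ∀ u j ω, |xt u j ω| ≤ b + 1 := fun u j ω => by
    have h := hbounded u j ω
    rw [abs_le]
    exact ⟨by linarith [h.1], h.2⟩
  have hxtint : ∀ u j, Integrable (xt u j) μ := fun u j =>
    aux_integrable_of_bounded (hmeas u j) (hxtabs u j)
  have hxtmem : ∀ u j, MemLp (xt u j) 2 μ := fun u j =>
    MemLp.of_bound (hmeas u j).aestronglyMeasurable (b + 1)
      (Filter.Eventually.of_forall fun ω => by
        simpa [Real.norm_eq_abs] using hxtabs u j ω)
  have hxabs : ∀ u j, |x u j| ≤ 1 := fun u j => abs_le.2 ⟨(hx u j).1, (hx u j).2⟩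
  -- key per-coordinate bound
  have hkey : ∀ j : Fin d,
      μ {ω | τ < |∑ u, w u * (xt u j ω - C * x u j)|} ≤
        ENNReal.ofReal E + ENNReal.ofReal E := by
    intro j
    have hM : (0:ℝ) < 2 * (b + 1) := by linarith
    have hYm : ∀ u, Measurable (fun ω => w u * (xt u j ω - C * x u j)) :=
      fun u => ((hmeas u j).sub measurable_const).const_mul _
    have hindepY : iIndepFun
        (fun u ω => w u * (xt u j ω - C * x u j)) μ :=
      (hindep j).comp (fun u r => w u * (r - C * x u j))
        (fun u => (measurable_id.sub measurable_const).const_mul _)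
    have hbddY : ∀ u ω, |w u * (xt u j ω - C * x u j)| ≤ 2 * (b + 1) := by
      intro u ω
      rw [abs_mul, abs_of_nonneg (hw0 u)]
      have h1 : |xt u j ω - C * x u j| ≤ b + 2 := by
        have h2 : |C * x u j| ≤ 1 := by
          rw [abs_mul, abs_of_nonneg hC0]
          nlinarith [hxabs u j, abs_nonneg (x u j)]
        calc |xt u j ω - C * x u j| ≤ |xt u j ω| + |C * x u j| := abs_sub _ _
          _ ≤ (b + 1) + 1 := add_le_add (hxtabs u j ω) h2
          _ = b + 2 := by ring
      calc w u * |xt u j ω - C * x u j| ≤ 1 * (b + 2) := by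
            apply mul_le_mul (hwle1 u) h1 (abs_nonneg _) zero_le_one
        _ ≤ 2 * (b + 1) := by linarith
    have hmeanY : ∀ u, ∫ ω, w u * (xt u j ω - C * x u j) ∂μ = 0 := by
      intro u
      rw [integral_const_mul, integral_sub (hxtint u j) (integrable_const _),
        integral_const, hmean u j]
      simp
    have hvW : (0:ℝ) ≤ σ ^ 2 * W := by
      apply mul_nonneg (sq_nonneg σ)
      exact Finset.sum_nonneg fun u _ => sq_nonneg _
    have hvarY : ∑ u, variance (fun ω => w u * (xt u j ω - C * x u j)) μ ≤ σ ^ 2 * W := by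
      have h1 : ∀ u, variance (fun ω => w u * (xt u j ω - C * x u j)) μ =
          w u ^ 2 * variance (xt u j) μ := by
        intro u
        rw [variance_const_mul, aux_variance_sub_const (hxtmem u j)]
      calc ∑ u, variance (fun ω => w u * (xt u j ω - C * x u j)) μ
          = ∑ u, w u ^ 2 * variance (xt u j) μ := Finset.sum_congr rfl fun u _ => h1 u
        _ ≤ ∑ u, w u ^ 2 * σ ^ 2 :=
            Finset.sum_le_sum fun u _ =>
              mul_le_mul_of_nonneg_left (hvar u j) (sq_nonneg _)
        _ = σ ^ 2 * W := by rw [hW, Finset.mul_sum]; exact Finset.sum_congr rfl fun u _ => by ring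
    have hbern := aux_bernstein_two (μ := μ)
      (fun u ω => w u * (xt u j ω - C * x u j)) hYm hindepY hM hbddY hmeanY hvW hvarY hτ
    have hEeq : Real.exp (-τ ^ 2 / (2 * (σ ^ 2 * W) + 2 / 3 * (2 * (b + 1)) * τ)) = E := by
      rw [hE]; congr 1; ring
    rwa [hEeq] at hbern
  -- the good set
  set G : Set Ω := {ω | ∀ j : Fin d,
      |(∑ u, w u * xt u j ω) - ∑ u, w u * x u j| ≤ τ + (1 - C)} with hG
  have hGmeas : MeasurableSet G := by
    have hGeq : G = ⋂ j : Fin d,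
        {ω | |(∑ u, w u * xt u j ω) - ∑ u, w u * x u j| ≤ τ + (1 - C)} := by
      ext ω; simp [hG, Set.mem_iInter]
    rw [hGeq]
    apply MeasurableSet.iInter
    intro j
    have hm : Measurable fun ω => |(∑ u, w u * xt u j ω) - ∑ u, w u * x u j| :=
      ((Finset.measurable_sum _ fun u _ => (hmeas u j).const_mul _).sub measurable_const).abs
    exact measurableSet_le hm measurable_const
  have hcompl : Gᶜ ⊆ ⋃ j : Fin d, {ω | τ < |∑ u, w u * (xt u j ω - C * x u j)|} := by
    intro ω hω
    simp only [hG, Set.mem_compl_iff, Set.mem_setOf_eq, not_forall] at hω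
    obtain ⟨j, hj⟩ := hω
    replace hj : τ + (1 - C) < |(∑ u, w u * xt u j ω) - ∑ u, w u * x u j| := not_le.1 hj
    refine Set.mem_iUnion.2 ⟨j, ?_⟩
    show τ < |∑ u, w u * (xt u j ω - C * x u j)|
    have hsum : ∑ u, w u * (xt u j ω - C * x u j) =
        (∑ u, w u * xt u j ω) - C * (∑ u, w u * x u j) := by
      rw [Finset.mul_sum]
      rw [← Finset.sum_sub_distrib]
      exact Finset.sum_congr rfl fun u _ => by ring
    have hzabs : |∑ u, w u * x u j| ≤ 1 := abs_le.2 ⟨(hz j).1, (hz j).2⟩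
    set A := ∑ u, w u * xt u j ω
    set z := ∑ u, w u * x u j
    have h3 : |A - z| ≤ |A - C * z| + |C * z - z| := abs_sub_le _ _ _
    have h4 : |C * z - z| ≤ 1 - C := by
      have h5 : C * z - z = -((1 - C) * z) := by ring
      rw [h5, abs_neg, abs_mul, abs_of_nonneg (by linarith : (0:ℝ) ≤ 1 - C)]
      nlinarith [hzabs, abs_nonneg z]
    rw [hsum]
    linarith
  have hunion : μ Gᶜ ≤ ENNReal.ofReal δ := by
    calc μ Gᶜ ≤ μ (⋃ j : Fin d, {ω | τ < |∑ u, w u * (xt u j ω - C * x u j)|}) :=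
          measure_mono hcompl
      _ ≤ ∑ j : Fin d, μ {ω | τ < |∑ u, w u * (xt u j ω - C * x u j)|} :=
          (measure_iUnion_le _).trans_eq (tsum_fintype _)
      _ ≤ ∑ _j : Fin d, (ENNReal.ofReal E + ENNReal.ofReal E) :=
          Finset.sum_le_sum fun j _ => hkey j
      _ = (d : ℝ≥0∞) * (ENNReal.ofReal E + ENNReal.ofReal E) := by
          rw [Finset.sum_const, Finset.card_univ, Fintype.card_fin, nsmul_eq_mul]
      _ = ENNReal.ofReal (2 * d * E) := by
          rw [← ENNReal.ofReal_add (Real.exp_nonneg _) (Real.exp_nonneg _),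
            ← ENNReal.ofReal_natCast d, ← ENNReal.ofReal_mul (by positivity)]
          congr 1
          rw [hE]; ring
      _ ≤ ENNReal.ofReal δ := ENNReal.ofReal_le_ofReal (by rw [hE]; exact hτδ)
  show ENNReal.ofReal (1 - δ) ≤ μ G
  have h1 : μ G + μ Gᶜ = 1 := by
    rw [measure_add_measure_compl hGmeas, measure_univ]
  have h2 : ENNReal.ofReal (1 - δ) + ENNReal.ofReal δ = 1 := by
    rw [← ENNReal.ofReal_add (by linarith) (by linarith)]
    norm_num
  have h3 : ENNReal.ofReal (1 - δ) + ENNReal.ofReal δ ≤ μ G + ENNReal.ofReal δ := by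
    rw [h2]
    calc (1 : ℝ≥0∞) = μ G + μ Gᶜ := h1.symm
      _ ≤ μ G + ENNReal.ofReal δ := add_le_add_right hunion _
  exact (ENNReal.add_le_add_iff_right ENNReal.ofReal_ne_top).1 h3
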